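/- Let k ∈ ℝ, l ≥ 1 a natural number, and let f : ℝⁿ → ℝ be C^l on ℝⁿ \ {0} and positively homogeneous of degree k (f(t • x) = t^k · f(x) for all t > 0 and x ≠ 0). Then for every v ≠ 0 and every X ∈ ℝⁿ, the l-th iterated derivative satisfies D^l f(v)(v, X, …, X) = (k − l + 1) · D^{l−1} f(v)(X, …, X), where one argument of D^l f(v) is v and the remaining l − 1 arguments are X. -/

import Mathlib

open scoped Topology

private lemma hom_iterated (n : ℕ) (k : ℝ) (l : ℕ)
    (f : (Fin n → ℝ) → ℝ)
    (hf : ContDiffOn ℝ l f {x | x ≠ 0})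
    (hhom : ∀ t : ℝ, 0 < t → ∀ x : Fin n → ℝ, x ≠ 0 → f (t • x) = t ^ k * f x) :
    ∀ m : ℕ, m ≤ l → ∀ t : ℝ, 0 < t → ∀ x : Fin n → ℝ, x ≠ 0 →
      iteratedFDeriv ℝ m f (t • x) = (t ^ (k - m) : ℝ) • iteratedFDeriv ℝ m f x := by
  have hU : IsOpen {x : Fin n → ℝ | x ≠ 0} := isOpen_compl_singleton
  intro m
  induction m with
  | zero =>
    intro _ t ht x hx
    ext w
    simp [iteratedFDeriv_zero_apply, hhom t ht x hx]
  | succ m ih =>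
    intro hml t ht x hx
    have hm : m ≤ l := (Nat.le_succ m).trans hml
    have htx : t • x ≠ 0 := by
      simp [smul_eq_zero, ne_of_gt ht, hx]
    -- differentiability of iteratedFDeriv m f at points ≠ 0
    have hdiff : ∀ y : Fin n → ℝ, y ≠ 0 → DifferentiableAt ℝ (iteratedFDeriv ℝ m f) y := by
      intro y hy
      have hcd : ContDiffAt ℝ l f y := hf.contDiffAt (hU.mem_nhds hy)
      have : ContDiffAt ℝ 1 (iteratedFDeriv ℝ m f) y := by
        apply hcd.iteratedFDeriv_right
        exact_mod_cast (by omega : 1 + m ≤ l)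
      exact this.differentiableAt one_ne_zero
    -- the scaling map
    have hsm : HasFDerivAt (fun y : Fin n → ℝ => t • y)
        (t • ContinuousLinearMap.id ℝ (Fin n → ℝ)) x := by
      have := (t • ContinuousLinearMap.id ℝ (Fin n → ℝ)).hasFDerivAt (x := x)
      simpa using this
    have h1 : HasFDerivAt (fun y => iteratedFDeriv ℝ m f (t • y))
        ((fderiv ℝ (iteratedFDeriv ℝ m f) (t • x)).comp
          (t • ContinuousLinearMap.id ℝ (Fin n → ℝ))) x :=
      ((hdiff _ htx).hasFDerivAt).comp x hsm
    have h2 : HasFDerivAt (fun y => (t ^ (k - m) : ℝ) • iteratedFDeriv ℝ m f y)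
        ((t ^ (k - m) : ℝ) • fderiv ℝ (iteratedFDeriv ℝ m f) x) x :=
      ((hdiff _ hx).hasFDerivAt).const_smul (t ^ (k - m) : ℝ)
    have heq : (fun y => iteratedFDeriv ℝ m f (t • y))
        =ᶠ[𝓝 x] fun y => (t ^ (k - m) : ℝ) • iteratedFDeriv ℝ m f y := by
      filter_upwards [hU.mem_nhds hx] with y hy
      exact ih hm t ht y hy
    have h1' : HasFDerivAt (fun y => iteratedFDeriv ℝ m f (t • y))
        ((t ^ (k - m) : ℝ) • fderiv ℝ (iteratedFDeriv ℝ m f) x) x :=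
      h2.congr_of_eventuallyEq heq
    have hkey := h1.unique h1'
    -- now compute
    ext w
    have hw := congrArg (fun (L : (Fin n → ℝ) →L[ℝ]
        ContinuousMultilinearMap ℝ (fun _ : Fin m => (Fin n → ℝ)) ℝ) => L (w 0) (Fin.tail w)) hkey
    simp only [ContinuousLinearMap.comp_apply, ContinuousLinearMap.smul_apply,
      ContinuousLinearMap.coe_smul', Pi.smul_apply, ContinuousLinearMap.id_apply,
      ContinuousMultilinearMap.smul_apply] at hw
    have hfd : fderiv ℝ (iteratedFDeriv ℝ m f) (t • x) (t • w 0) (Fin.tail w)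
        = t * fderiv ℝ (iteratedFDeriv ℝ m f) (t • x) (w 0) (Fin.tail w) := by
      rw [map_smul]; simp
    rw [hfd] at hw
    have ht' : (t : ℝ) ≠ 0 := ne_of_gt ht
    rw [iteratedFDeriv_succ_apply_left, ContinuousMultilinearMap.smul_apply,
      iteratedFDeriv_succ_apply_left]
    have hpow : (t : ℝ) ^ (k - ((m : ℕ) + 1 : ℕ) : ℝ) = t ^ (k - m) / t := by
      rw [eq_div_iff ht',
        show (k - (m:ℝ)) = (k - ((m+1:ℕ):ℝ)) + 1 by push_cast; ring,
        Real.rpow_add ht, Real.rpow_one]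
    rw [hpow, smul_eq_mul] at *
    rw [div_mul_eq_mul_div, eq_div_iff ht']
    linarith [hw]

theorem iteratedFDeriv_radial_contraction (n : ℕ) (k : ℝ) (l : ℕ) (hl : 1 ≤ l)
    (f : (Fin n → ℝ) → ℝ)
    (hf : ContDiffOn ℝ l f {x | x ≠ 0})
    (hhom : ∀ t : ℝ, 0 < t → ∀ x : Fin n → ℝ, x ≠ 0 → f (t • x) = t ^ k * f x)
    (v : Fin n → ℝ) (hv : v ≠ 0) (X : Fin n → ℝ) :
    iteratedFDeriv ℝ l f v (Function.update (fun _ : Fin l => X) ⟨0, hl⟩ v) =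
      (k - l + 1) * iteratedFDeriv ℝ (l - 1) f v (fun _ : Fin (l - 1) => X) := by
  have hU : IsOpen {x : Fin n → ℝ | x ≠ 0} := isOpen_compl_singleton
  obtain ⟨m, rfl⟩ : ∃ m, l = m + 1 := ⟨l - 1, (Nat.succ_pred_eq_of_pos hl).symm⟩
  set G := iteratedFDeriv ℝ m f with hG
  have hdiff : DifferentiableAt ℝ G v := by
    have hcd : ContDiffAt ℝ (m + 1 : ℕ) f v := hf.contDiffAt (hU.mem_nhds hv)
    have : ContDiffAt ℝ 1 G v := by
      apply hcd.iteratedFDeriv_right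
      exact_mod_cast (by omega : 1 + m ≤ m + 1)
    exact this.differentiableAt one_ne_zero
  -- h y = G y (X,...,X)
  set A := ContinuousMultilinearMap.apply ℝ (fun _ : Fin m => (Fin n → ℝ)) ℝ (fun _ => X) with hA
  have hAder : HasFDerivAt (fun y => G y (fun _ : Fin m => X))
      (A.comp (fderiv ℝ G v)) v := A.hasFDerivAt.comp v hdiff.hasFDerivAt
  -- curve t ↦ t • v
  have hcurve : HasDerivAt (fun t : ℝ => t • v) v 1 := by
    simpa using (hasDerivAt_id (1 : ℝ)).smul_const v
  have hcomp : HasDerivAt (fun t : ℝ => G (t • v) (fun _ : Fin m => X))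
      (A.comp (fderiv ℝ G v) v) 1 := by
    have hAder' : HasFDerivAt (fun y => G y (fun _ : Fin m => X))
        (A.comp (fderiv ℝ G v)) ((1:ℝ) • v) := by rwa [one_smul]
    exact hAder'.comp_hasDerivAt 1 hcurve
  -- the other description of the curve
  have hrhs : HasDerivAt (fun t : ℝ => (t ^ (k - m) : ℝ) * G v (fun _ : Fin m => X))
      ((k - m) * G v (fun _ : Fin m => X)) 1 := by
    have h1 : HasDerivAt (fun t : ℝ => t ^ (k - (m : ℝ)))
        ((k - m) * (1 : ℝ) ^ (k - (m : ℝ) - 1)) 1 :=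
      Real.hasDerivAt_rpow_const (Or.inl one_ne_zero)
    have := h1.mul_const (G v (fun _ : Fin m => X))
    simpa using this
  have heq : (fun t : ℝ => G (t • v) (fun _ : Fin m => X))
      =ᶠ[𝓝 (1:ℝ)] fun t : ℝ => (t ^ (k - m) : ℝ) * G v (fun _ : Fin m => X) := by
    filter_upwards [Ioi_mem_nhds (show (0:ℝ) < 1 by norm_num)] with t ht
    have := hom_iterated n k (m+1) f hf hhom m (Nat.le_succ m) t ht v hv
    rw [hG, this]
    simp
  have hcomp' : HasDerivAt (fun t : ℝ => G (t • v) (fun _ : Fin m => X))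
      ((k - m) * G v (fun _ : Fin m => X)) 1 := hrhs.congr_of_eventuallyEq heq
  have hkey : A.comp (fderiv ℝ G v) v = (k - m) * G v (fun _ : Fin m => X) :=
    hcomp.unique hcomp'
  -- unfold LHS
  have hupd0 : (Function.update (fun _ : Fin (m+1) => X) ⟨0, hl⟩ v) 0 = v := by
    simp [show (⟨0, hl⟩ : Fin (m+1)) = 0 from rfl]
  have hupdt : Fin.tail (Function.update (fun _ : Fin (m+1) => X) ⟨0, hl⟩ v)
      = fun _ : Fin m => X := by
    funext i
    simp [Fin.tail, show (⟨0, hl⟩ : Fin (m+1)) = 0 from rfl,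
      Function.update_apply, Fin.succ_ne_zero]
  rw [iteratedFDeriv_succ_apply_left, hupd0, hupdt]
  have : A.comp (fderiv ℝ G v) v = fderiv ℝ G v v (fun _ : Fin m => X) := by
    simp [hA]
  rw [this] at hkey
  rw [hkey]
  show (k - (m:ℝ)) * (G v fun _ : Fin m => X)
      = (k - ((m+1:ℕ):ℝ) + 1) * (G v fun _ : Fin m => X)
  push_cast
  ring
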